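/- arXiv:2010.14335 — 2 statements merged into one kernel-verified Lean document; each statement's English description precedes it below -/
import Mathlib

section
/- Let H, η, M, t > 0 with η > M, and let h : ℝ → ℝ satisfy |h(τ)| ≤ H·e^{−ητ} for all τ ≥ 0. Let u : [-t,0] → ℝ be M-Lipschitz with a zero at s₀ ∈ [-t,0], and let w : [-t,0] → ℝ be such that u+w is M-Lipschitz and w(s₀) ≠ 0. Then |h(∫_{-t}^{0} 1/|u(s)+w(s)| ds)| ≤ H · (|w(s₀)|/(|w(s₀)| + M·t/2))^{η/M}. -/
open Set

set_option maxHeartbeats 1600000 in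
/-- Combining the exponential decay of `h` with the logarithmic lower bound for the singular
integral yields the power-law estimate
`|h(∫ 1/|u+w|)| ≤ H (|w(s₀)|/(|w(s₀)| + M t/2))^(η/M)`. -/
theorem stmt_3 (H η M t s₀ : ℝ) (hH : 0 < H) (hM : 0 < M) (ht : 0 < t) (hηM : M < η)
    (hs₀ : s₀ ∈ Icc (-t) 0)
    (h : ℝ → ℝ) (hh : ∀ τ : ℝ, 0 ≤ τ → |h τ| ≤ H * Real.exp (-(η * τ)))
    (u w : ℝ → ℝ)
    (hu : ∀ s ∈ Icc (-t) 0, ∀ r ∈ Icc (-t) 0, |u s - u r| ≤ M * |s - r|)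
    (hu0 : u s₀ = 0)
    (huw : ∀ s ∈ Icc (-t) 0, ∀ r ∈ Icc (-t) 0,
      |(u s + w s) - (u r + w r)| ≤ M * |s - r|)
    (hw0 : w s₀ ≠ 0)
    (hreg : ∀ s ∈ Icc (-t) 0, u s + w s ≠ 0) :
    |h (∫ s in (-t)..0, 1 / |u s + w s|)| ≤
      H * (|w s₀| / (|w s₀| + M * t / 2)) ^ (η / M) := by
  obtain ⟨hs₀l, hs₀r⟩ := hs₀
  have ht' : -t ≤ (0:ℝ) := by linarith
  set c : ℝ := |w s₀| with hc_def
  have hc : 0 < c := abs_pos.mpr hw0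
  have hs₀mem : s₀ ∈ Icc (-t) (0:ℝ) := ⟨hs₀l, hs₀r⟩
  -- continuity of the integrand
  have hcont : ContinuousOn (fun s => u s + w s) (Icc (-t) 0) := by
    apply LipschitzOnWith.continuousOn (K := M.toNNReal)
    apply LipschitzOnWith.of_dist_le_mul
    intro x hx y hy
    rw [Real.dist_eq, Real.dist_eq]
    simpa [Real.coe_toNNReal _ hM.le] using huw x hx y hy
  have hcontInv : ContinuousOn (fun s => 1 / |u s + w s|) (Icc (-t) 0) := by
    simp only [one_div]
    exact (hcont.abs.inv₀ (fun x hx => abs_ne_zero.mpr (hreg x hx)))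
  -- pointwise bound
  have hptwise : ∀ s ∈ Icc (-t) (0:ℝ),
      1 / (c + M * |s - s₀|) ≤ 1 / |u s + w s| := by
    intro s hs
    have hub : |u s + w s| ≤ c + M * |s - s₀| := by
      have := huw s hs s₀ hs₀mem
      rw [hu0] at this
      have h2 : |u s + w s| - |(0:ℝ) + w s₀| ≤ |(u s + w s) - (0 + w s₀)| :=
        abs_sub_abs_le_abs_sub _ _
      simp only [zero_add] at this h2
      linarith
    have hpos : 0 < |u s + w s| := abs_pos.mpr (hreg s hs)
    exact one_div_le_one_div_of_le hpos hub
  -- integrability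
  have hInt : IntervalIntegrable (fun s => 1 / |u s + w s|) MeasureTheory.volume (-t) 0 := by
    apply ContinuousOn.intervalIntegrable
    rwa [uIcc_of_le ht']
  have hInt1 : IntervalIntegrable (fun s => 1 / |u s + w s|) MeasureTheory.volume (-t) s₀ :=
    hInt.mono_set (by rw [uIcc_of_le ht', uIcc_of_le hs₀l]; exact Icc_subset_Icc le_rfl hs₀r)
  have hInt2 : IntervalIntegrable (fun s => 1 / |u s + w s|) MeasureTheory.volume s₀ 0 :=
    hInt.mono_set (by rw [uIcc_of_le ht', uIcc_of_le hs₀r]; exact Icc_subset_Icc hs₀l le_rfl)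
  -- comparison functions
  set g₁ : ℝ → ℝ := fun s => 1 / (c + M * (s₀ - s)) with hg₁
  set g₂ : ℝ → ℝ := fun s => 1 / (c + M * (s - s₀)) with hg₂
  have hg₁cont : ∀ s ∈ Icc (-t) s₀, (0:ℝ) < c + M * (s₀ - s) := by
    intro s hs
    have : 0 ≤ s₀ - s := by linarith [hs.2]
    nlinarith
  have hg₂pos : ∀ s ∈ Icc s₀ (0:ℝ), (0:ℝ) < c + M * (s - s₀) := by
    intro s hs
    have : 0 ≤ s - s₀ := by linarith [hs.1]
    nlinarith
  -- compute ∫ g₁ over [-t, s₀]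
  have hJ₁ : ∫ s in (-t)..s₀, g₁ s
      = (-(1/M) * Real.log c) - (-(1/M) * Real.log (c + M * (s₀ - (-t)))) := by
    have := intervalIntegral.integral_eq_sub_of_hasDerivAt
      (f := fun s => -(1/M) * Real.log (c + M * (s₀ - s))) (f' := g₁) (a := -t) (b := s₀)
      ?_ ?_
    · rw [this]; ring_nf
    · intro x hx
      rw [uIcc_of_le hs₀l] at hx
      have hpos := hg₁cont x hx
      have hd : HasDerivAt (fun s : ℝ => c + M * (s₀ - s)) (-M) x := by
        have : HasDerivAt (fun s : ℝ => c + M * (s₀ - s)) (0 + M * (0 - 1)) x := by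
          apply HasDerivAt.add (hasDerivAt_const _ _)
          exact ((hasDerivAt_const x s₀).sub (hasDerivAt_id x)).const_mul M
        simpa using this
      have := ((Real.hasDerivAt_log hpos.ne').comp x hd).const_mul (-(1/M))
      convert this using 1
      show 1 / (c + M * (s₀ - x)) = _
      field_simp
      rfl
      rfl
    · apply ContinuousOn.intervalIntegrable
      rw [uIcc_of_le hs₀l]
      apply ContinuousOn.div continuousOn_const
      · fun_prop
      · intro x hx; exact (hg₁cont x hx).ne'
  -- compute ∫ g₂ over [s₀, 0]
  have hJ₂ : ∫ s in s₀..(0:ℝ), g₂ s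
      = ((1/M) * Real.log (c + M * (0 - s₀))) - ((1/M) * Real.log c) := by
    have := intervalIntegral.integral_eq_sub_of_hasDerivAt
      (f := fun s => (1/M) * Real.log (c + M * (s - s₀))) (f' := g₂) (a := s₀) (b := 0)
      ?_ ?_
    · rw [this]; ring_nf
    · intro x hx
      rw [uIcc_of_le hs₀r] at hx
      have hpos := hg₂pos x hx
      have hd : HasDerivAt (fun s : ℝ => c + M * (s - s₀)) M x := by
        have : HasDerivAt (fun s : ℝ => c + M * (s - s₀)) (0 + M * (1 - 0)) x := by
          apply HasDerivAt.add (hasDerivAt_const _ _)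
          exact ((hasDerivAt_id x).sub (hasDerivAt_const x s₀)).const_mul M
        simpa using this
      have := ((Real.hasDerivAt_log hpos.ne').comp x hd).const_mul (1/M)
      convert this using 1
      show 1 / (c + M * (x - s₀)) = _
      field_simp
      rfl
      rfl
    · apply ContinuousOn.intervalIntegrable
      rw [uIcc_of_le hs₀r]
      apply ContinuousOn.div continuousOn_const
      · fun_prop
      · intro x hx; exact (hg₂pos x hx).ne'
  -- integrability of g₁, g₂
  have hg₁int : IntervalIntegrable g₁ MeasureTheory.volume (-t) s₀ := by
    apply ContinuousOn.intervalIntegrable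
    rw [uIcc_of_le hs₀l]
    apply ContinuousOn.div continuousOn_const
    · fun_prop
    · intro x hx; exact (hg₁cont x hx).ne'
  have hg₂int : IntervalIntegrable g₂ MeasureTheory.volume s₀ 0 := by
    apply ContinuousOn.intervalIntegrable
    rw [uIcc_of_le hs₀r]
    apply ContinuousOn.div continuousOn_const
    · fun_prop
    · intro x hx; exact (hg₂pos x hx).ne'
  -- comparisons
  have hcmp₁ : (∫ s in (-t)..s₀, g₁ s) ≤ ∫ s in (-t)..s₀, 1 / |u s + w s| := by
    apply intervalIntegral.integral_mono_on hs₀l hg₁int hInt1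
    intro s hs
    have hmem : s ∈ Icc (-t) (0:ℝ) := ⟨hs.1, le_trans hs.2 hs₀r⟩
    have habs : |s - s₀| = s₀ - s := by
      rw [abs_of_nonpos (by linarith [hs.2])]; ring
    have := hptwise s hmem
    rw [habs] at this
    simpa [hg₁] using this
  have hcmp₂ : (∫ s in s₀..(0:ℝ), g₂ s) ≤ ∫ s in s₀..(0:ℝ), 1 / |u s + w s| := by
    apply intervalIntegral.integral_mono_on hs₀r hg₂int hInt2
    intro s hs
    have hmem : s ∈ Icc (-t) (0:ℝ) := ⟨le_trans hs₀l hs.1, hs.2⟩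
    have habs : |s - s₀| = s - s₀ := abs_of_nonneg (by linarith [hs.1])
    have := hptwise s hmem
    rw [habs] at this
    simpa [hg₂] using this
  -- split the integral
  have hsplit : (∫ s in (-t)..s₀, 1 / |u s + w s|) + (∫ s in s₀..(0:ℝ), 1 / |u s + w s|)
      = ∫ s in (-t)..(0:ℝ), 1 / |u s + w s| :=
    intervalIntegral.integral_add_adjacent_intervals hInt1 hInt2
  set I : ℝ := ∫ s in (-t)..(0:ℝ), 1 / |u s + w s| with hI
  obtain ⟨a, ha_def⟩ : ∃ x : ℝ, x = s₀ + t := ⟨_, rfl⟩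
  obtain ⟨b, hb_def⟩ : ∃ x : ℝ, x = -s₀ := ⟨_, rfl⟩
  have ha0 : 0 ≤ a := by rw [ha_def]; linarith
  have hb0 : 0 ≤ b := by rw [hb_def]; linarith
  have hab : a + b = t := by rw [ha_def, hb_def]; ring
  have hca : 0 < c + M * a := by nlinarith [mul_nonneg hM.le ha0]
  have hcb : 0 < c + M * b := by nlinarith [mul_nonneg hM.le hb0]
  have hct : 0 < c + M * t / 2 := by nlinarith
  -- lower bound for I
  have hIlow : (1/M) * (Real.log (c + M * t / 2) - Real.log c) ≤ I := by
    have hIge : (1/M) * (Real.log (c + M * a) + Real.log (c + M * b)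
        - 2 * Real.log c) ≤ I := by
      rw [← hsplit]
      have e₁ : s₀ - (-t) = a := by rw [ha_def]; ring
      have e₂ : (0:ℝ) - s₀ = b := by rw [hb_def]; ring
      rw [e₁] at hJ₁; rw [e₂] at hJ₂
      linarith [hcmp₁, hcmp₂, hJ₁, hJ₂]
    have hlog : Real.log (c + M * t / 2) + Real.log c
        ≤ Real.log (c + M * a) + Real.log (c + M * b) := by
      rw [← Real.log_mul hct.ne' hc.ne', ← Real.log_mul hca.ne' hcb.ne']
      apply Real.log_le_log (by positivity)
      have h1 : c * M * (a + b) = c * M * t := by rw [hab]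
      nlinarith [h1, mul_nonneg (mul_nonneg (mul_nonneg hM.le hM.le) ha0) hb0,
        mul_nonneg (mul_nonneg hc.le hM.le) ht.le]
    have hM1 : (0:ℝ) < 1/M := by positivity
    have hkey := mul_le_mul_of_nonneg_left hlog hM1.le
    linarith [hIge, hkey]
  have hL0 : 0 ≤ Real.log (c + M * t / 2) - Real.log c :=
    sub_nonneg.mpr (Real.log_le_log hc (by nlinarith))
  have hI0 : 0 ≤ I :=
    le_trans (mul_nonneg (by positivity) hL0) hIlow
  -- conclude
  have hbound := hh I hI0
  have hη : 0 < η := lt_trans hM hηM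
  have hrw : H * (c / (c + M * t / 2)) ^ (η / M)
      = H * Real.exp (-(η * ((1/M) * (Real.log (c + M * t / 2) - Real.log c)))) := by
    rw [Real.rpow_def_of_pos (by positivity), Real.log_div hc.ne' hct.ne']
    congr 1
    field_simp
    ring
  rw [hrw]
  refine le_trans hbound ?_
  gcongr
end

section
/- Let {V(t)}_{t≥0} be as in the previous statement but with A = Df(0,0) having one positive and one negative eigenvalue, with spectral decomposition ℝ² = Ẽˢ ⊕ Ẽᵘ. Define Eˢ = {φ ∈ B : φ(0) ∈ Ẽˢ} and Eᵘ = {φ ∈ B : φ(0) ∈ Ẽᵘ and φ(t) = e^{tA}φ(0) for all t ≤ 0}. Then Eˢ and Eᵘ are closed subspaces of B, B = Eˢ ⊕ Eᵘ, and both are invariant under V(t) for t ≥ 0. -/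
open Set

set_option maxHeartbeats 1000000

/-- The splitting `B = Eˢ ⊕ Eᵘ` of the weighted phase space according to the spectral
decomposition `ℝ² = Ẽˢ ⊕ Ẽᵘ` of `A = Df(0,0)`: `Eˢ` and `Eᵘ` are closed subspaces of `B`,
every `φ ∈ B` decomposes uniquely (on `(-∞,0]`) as `φ = φˢ + φᵘ`, and both subspaces are
invariant under the solution semigroup `V(t)`, `t ≥ 0`. -/
theorem stmt_18 (A : ℝ × ℝ →L[ℝ] ℝ × ℝ) (Ets Etu : Submodule ℝ (ℝ × ℝ))
    (hcompl : IsCompl Ets Etu)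
    (hinvS : ∀ t : ℝ, ∀ x ∈ Ets, NormedSpace.exp (t • A) x ∈ Ets)
    (hinvU : ∀ t : ℝ, ∀ x ∈ Etu, NormedSpace.exp (t • A) x ∈ Etu)
    (lam Cu : ℝ) (hlam : 0 < lam) (hCu : 0 < Cu)
    (hgrow : ∀ θ ≤ (0:ℝ), ∀ x ∈ Etu,
      ‖NormedSpace.exp (θ • A) x‖ ≤ Cu * Real.exp (-(lam * θ)) * ‖x‖)
    (B Es Eu : Set (ℝ → ℝ × ℝ))
    (hB : B = {φ | ContinuousOn φ (Iic 0) ∧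
      ∃ N : ℝ, ∀ θ ≤ (0:ℝ), Real.exp (lam * θ) * ‖φ θ‖ ≤ N})
    (hEs : Es = {φ ∈ B | φ 0 ∈ Ets})
    (hEu : Eu = {φ ∈ B | φ 0 ∈ Etu ∧
      ∀ θ ≤ (0:ℝ), φ θ = NormedSpace.exp (θ • A) (φ 0)})
    (V : ℝ → (ℝ → ℝ × ℝ) → (ℝ → ℝ × ℝ))
    (hV : V = fun t φ θ =>
      if θ < -t then φ (t + θ) else NormedSpace.exp ((t + θ) • A) (φ 0)) :
    -- `Eˢ` and `Eᵘ` are subspaces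
    (∀ φ ∈ Es, ∀ ψ ∈ Es, ∀ c : ℝ, φ + ψ ∈ Es ∧ c • φ ∈ Es) ∧
    (∀ φ ∈ Eu, ∀ ψ ∈ Eu, ∀ c : ℝ, φ + ψ ∈ Eu ∧ c • φ ∈ Eu) ∧
    -- `Eˢ` and `Eᵘ` are closed in `B` w.r.t. the weighted norm (sequentially)
    (∀ (φseq : ℕ → ℝ → ℝ × ℝ) (φ : ℝ → ℝ × ℝ), (∀ n, φseq n ∈ Es) → φ ∈ B →
      (∀ ε > (0:ℝ), ∃ N : ℕ, ∀ n ≥ N, ∀ θ ≤ (0:ℝ),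
        Real.exp (lam * θ) * ‖φseq n θ - φ θ‖ ≤ ε) → φ ∈ Es) ∧
    (∀ (φseq : ℕ → ℝ → ℝ × ℝ) (φ : ℝ → ℝ × ℝ), (∀ n, φseq n ∈ Eu) → φ ∈ B →
      (∀ ε > (0:ℝ), ∃ N : ℕ, ∀ n ≥ N, ∀ θ ≤ (0:ℝ),
        Real.exp (lam * θ) * ‖φseq n θ - φ θ‖ ≤ ε) → φ ∈ Eu) ∧
    -- `B = Eˢ ⊕ Eᵘ` : existence and uniqueness of the decomposition on `(-∞,0]`
    (∀ φ ∈ B, ∃ φs ∈ Es, ∃ φu ∈ Eu, Set.EqOn φ (φs + φu) (Iic 0)) ∧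
    (∀ φs ∈ Es, ∀ φu ∈ Eu, ∀ φs' ∈ Es, ∀ φu' ∈ Eu,
      Set.EqOn (φs + φu) (φs' + φu') (Iic 0) →
        Set.EqOn φs φs' (Iic 0) ∧ Set.EqOn φu φu' (Iic 0)) ∧
    -- invariance under the semigroup
    (∀ t : ℝ, 0 ≤ t → ∀ φ ∈ Es, V t φ ∈ Es) ∧
    (∀ t : ℝ, 0 ≤ t → ∀ φ ∈ Eu, V t φ ∈ Eu) := by
  subst hB hEs hEu hV
  -- basic facts about the matrix exponential
  have hexp0 : ∀ v : ℝ × ℝ, NormedSpace.exp ((0:ℝ) • A) v = v := fun v => by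
    rw [zero_smul, NormedSpace.exp_zero, ContinuousLinearMap.one_apply]
  have hexpadd : ∀ (s u : ℝ) (v : ℝ × ℝ),
      NormedSpace.exp ((s + u) • A) v
        = NormedSpace.exp (s • A) (NormedSpace.exp (u • A) v) := fun s u v => by
    rw [add_smul, NormedSpace.exp_add_of_commute_of_mem_ball (𝕂 := ℝ) (((Commute.refl A).smul_left s).smul_right u)
      (by rw [NormedSpace.expSeries_radius_eq_top]; exact edist_lt_top _ _)
      (by rw [NormedSpace.expSeries_radius_eq_top]; exact edist_lt_top _ _),
      ContinuousLinearMap.mul_apply]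
  have hcontv : ∀ v : ℝ × ℝ, Continuous fun θ : ℝ => NormedSpace.exp (θ • A) v := fun v =>
    ((continuous_iff_continuousAt.2 fun x =>
      (NormedSpace.exp_analytic (𝕂 := ℝ) (𝔸 := ℝ × ℝ →L[ℝ] ℝ × ℝ) x).continuousAt).comp (continuous_id.smul continuous_const)).clm_apply
      continuous_const
  -- membership of exponential trajectories of unstable vectors in B
  have hexpB : ∀ v ∈ Etu, ∀ θ ≤ (0:ℝ),
      Real.exp (lam * θ) * ‖NormedSpace.exp (θ • A) v‖ ≤ Cu * ‖v‖ := by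
    intro v hv θ hθ
    calc Real.exp (lam * θ) * ‖NormedSpace.exp (θ • A) v‖
        ≤ Real.exp (lam * θ) * (Cu * Real.exp (-(lam * θ)) * ‖v‖) :=
          mul_le_mul_of_nonneg_left (hgrow θ hθ v hv) (Real.exp_pos _).le
      _ = Cu * ‖v‖ * (Real.exp (lam * θ) * Real.exp (-(lam * θ))) := by ring
      _ = Cu * ‖v‖ := by rw [← Real.exp_add, add_neg_cancel, Real.exp_zero, mul_one]
  -- V t φ lies in B whenever φ does and t ≥ 0
  have hVB : ∀ t : ℝ, 0 ≤ t → ∀ φ : ℝ → ℝ × ℝ,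
      φ ∈ {φ : ℝ → ℝ × ℝ | ContinuousOn φ (Iic 0) ∧
        ∃ N : ℝ, ∀ θ ≤ (0:ℝ), Real.exp (lam * θ) * ‖φ θ‖ ≤ N} →
      (fun θ => if θ < -t then φ (t + θ) else NormedSpace.exp ((t + θ) • A) (φ 0))
        ∈ {φ : ℝ → ℝ × ℝ | ContinuousOn φ (Iic 0) ∧
        ∃ N : ℝ, ∀ θ ≤ (0:ℝ), Real.exp (lam * θ) * ‖φ θ‖ ≤ N} := by
    intro t ht φ hφ
    obtain ⟨hφc, Nφ, hNφ⟩ := hφ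
    have hNφ0 : 0 ≤ Nφ := le_trans (by positivity) (hNφ 0 le_rfl)
    have hgc : Continuous fun θ : ℝ => NormedSpace.exp ((t + θ) • A) (φ 0) :=
      (hcontv (φ 0)).comp (continuous_const.add continuous_id)
    constructor
    · -- continuity
      have hfc : Continuous fun θ : ℝ => φ (min (t + θ) 0) :=
        hφc.comp_continuous ((continuous_const.add continuous_id).min continuous_const)
          fun θ => mem_Iic.2 (min_le_right _ _)
      have heq : (fun θ => if θ < -t then φ (t + θ)
            else NormedSpace.exp ((t + θ) • A) (φ 0))
          = fun θ : ℝ => if θ ≤ -t then φ (min (t + θ) 0)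
            else NormedSpace.exp ((t + θ) • A) (φ 0) := by
        funext θ
        rcases lt_trichotomy θ (-t) with h | h | h
        · rw [if_pos h, if_pos h.le, min_eq_left (by linarith)]
        · rw [if_neg (by simp [h]), if_pos h.le, show t + θ = 0 by rw [h]; ring,
            hexp0 (φ 0), min_self]
        · rw [if_neg (by linarith), if_neg (by linarith)]
      rw [heq]
      exact (Continuous.if_le hfc hgc continuous_id continuous_const fun θ hθ => by
        have hθ' : θ = -t := hθ
        rw [show t + θ = 0 by rw [hθ']; ring, hexp0 (φ 0), min_self]).continuousOn
    · -- the weighted bound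
      obtain ⟨C, hC⟩ := (isCompact_Icc (a := -t) (b := (0:ℝ))).exists_bound_of_continuousOn
        hgc.continuousOn
      refine ⟨max Nφ C, fun θ hθ => ?_⟩
      show Real.exp (lam * θ)
          * ‖if θ < -t then φ (t + θ) else NormedSpace.exp ((t + θ) • A) (φ 0)‖ ≤ max Nφ C
      by_cases h : θ < -t
      · rw [if_pos h]
        have h1 : t + θ ≤ 0 := by linarith
        have harg : lam * θ = -(lam * t) + lam * (t + θ) := by ring
        rw [harg, Real.exp_add, mul_assoc]
        calc Real.exp (-(lam * t)) * (Real.exp (lam * (t + θ)) * ‖φ (t + θ)‖)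
            ≤ 1 * Nφ := mul_le_mul (Real.exp_le_one_iff.2 (by nlinarith))
              (hNφ (t + θ) h1) (by positivity) one_pos.le
          _ ≤ max Nφ C := by rw [one_mul]; exact le_max_left _ _
      · rw [if_neg h]
        have hmem : θ ∈ Icc (-t) (0:ℝ) := ⟨not_lt.1 h, hθ⟩
        calc Real.exp (lam * θ) * ‖NormedSpace.exp ((t + θ) • A) (φ 0)‖
            ≤ 1 * C := mul_le_mul (Real.exp_le_one_iff.2 (by nlinarith))
              (hC θ hmem) (norm_nonneg _) one_pos.le
          _ ≤ max Nφ C := by rw [one_mul]; exact le_max_right _ _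
  refine ⟨?_, ?_, ?_, ?_, ?_, ?_, ?_, ?_⟩
  · -- Es is a subspace
    rintro φ ⟨⟨hφc, Nφ, hNφ⟩, hφ0⟩ ψ ⟨⟨hψc, Nψ, hNψ⟩, hψ0⟩ c
    constructor
    · refine ⟨⟨hφc.add hψc, Nφ + Nψ, fun θ hθ => ?_⟩, Ets.add_mem hφ0 hψ0⟩
      calc Real.exp (lam * θ) * ‖(φ + ψ) θ‖
          ≤ Real.exp (lam * θ) * (‖φ θ‖ + ‖ψ θ‖) :=
            mul_le_mul_of_nonneg_left (norm_add_le _ _) (Real.exp_pos _).le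
        _ = Real.exp (lam * θ) * ‖φ θ‖ + Real.exp (lam * θ) * ‖ψ θ‖ := by ring
        _ ≤ Nφ + Nψ := add_le_add (hNφ θ hθ) (hNψ θ hθ)
    · refine ⟨⟨hφc.const_smul c, |c| * Nφ, fun θ hθ => ?_⟩, Ets.smul_mem c hφ0⟩
      have : ‖(c • φ) θ‖ = |c| * ‖φ θ‖ := by
        simp [Pi.smul_apply, norm_smul, Real.norm_eq_abs]
      rw [this, show Real.exp (lam * θ) * (|c| * ‖φ θ‖)
          = |c| * (Real.exp (lam * θ) * ‖φ θ‖) by ring]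
      exact mul_le_mul_of_nonneg_left (hNφ θ hθ) (abs_nonneg c)
  · -- Eu is a subspace
    rintro φ ⟨⟨hφc, Nφ, hNφ⟩, hφ0, hφf⟩ ψ ⟨⟨hψc, Nψ, hNψ⟩, hψ0, hψf⟩ c
    constructor
    · refine ⟨⟨hφc.add hψc, Nφ + Nψ, fun θ hθ => ?_⟩, Etu.add_mem hφ0 hψ0,
        fun θ hθ => ?_⟩
      · calc Real.exp (lam * θ) * ‖(φ + ψ) θ‖
            ≤ Real.exp (lam * θ) * (‖φ θ‖ + ‖ψ θ‖) :=
              mul_le_mul_of_nonneg_left (norm_add_le _ _) (Real.exp_pos _).le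
          _ = Real.exp (lam * θ) * ‖φ θ‖ + Real.exp (lam * θ) * ‖ψ θ‖ := by ring
          _ ≤ Nφ + Nψ := add_le_add (hNφ θ hθ) (hNψ θ hθ)
      · simp only [Pi.add_apply, map_add]
        rw [hφf θ hθ, hψf θ hθ]
    · refine ⟨⟨hφc.const_smul c, |c| * Nφ, fun θ hθ => ?_⟩, Etu.smul_mem c hφ0,
        fun θ hθ => ?_⟩
      · have : ‖(c • φ) θ‖ = |c| * ‖φ θ‖ := by
          simp [Pi.smul_apply, norm_smul, Real.norm_eq_abs]
        rw [this, show Real.exp (lam * θ) * (|c| * ‖φ θ‖)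
            = |c| * (Real.exp (lam * θ) * ‖φ θ‖) by ring]
        exact mul_le_mul_of_nonneg_left (hNφ θ hθ) (abs_nonneg c)
      · simp only [Pi.smul_apply, map_smul]
        rw [hφf θ hθ]
  · -- Es is closed
    intro φseq φ hseq hφB hconv
    have key : ∀ θ ≤ (0:ℝ), Filter.Tendsto (fun n => φseq n θ) Filter.atTop (nhds (φ θ)) := by
      intro θ hθ
      rw [NormedAddCommGroup.tendsto_atTop]
      intro ε hε
      obtain ⟨N, hN⟩ := hconv (Real.exp (lam * θ) * (ε / 2)) (by positivity)
      refine ⟨N, fun n hn => ?_⟩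
      have h1 : ‖φseq n θ - φ θ‖ ≤ ε / 2 :=
        le_of_mul_le_mul_left (hN n hn θ hθ) (Real.exp_pos _)
      linarith
    exact ⟨hφB, (Submodule.closed_of_finiteDimensional Ets).mem_of_tendsto (key 0 le_rfl)
      (Filter.Eventually.of_forall fun n => (hseq n).2)⟩
  · -- Eu is closed
    intro φseq φ hseq hφB hconv
    have key : ∀ θ ≤ (0:ℝ), Filter.Tendsto (fun n => φseq n θ) Filter.atTop (nhds (φ θ)) := by
      intro θ hθ
      rw [NormedAddCommGroup.tendsto_atTop]
      intro ε hε
      obtain ⟨N, hN⟩ := hconv (Real.exp (lam * θ) * (ε / 2)) (by positivity)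
      refine ⟨N, fun n hn => ?_⟩
      have h1 : ‖φseq n θ - φ θ‖ ≤ ε / 2 :=
        le_of_mul_le_mul_left (hN n hn θ hθ) (Real.exp_pos _)
      linarith
    refine ⟨hφB, (Submodule.closed_of_finiteDimensional Etu).mem_of_tendsto (key 0 le_rfl)
      (Filter.Eventually.of_forall fun n => (hseq n).2.1), fun θ hθ => ?_⟩
    have h2 : Filter.Tendsto (fun n => φseq n θ) Filter.atTop
        (nhds (NormedSpace.exp (θ • A) (φ 0))) := by
      have h3 := ((NormedSpace.exp (θ • A)).continuous.tendsto (φ 0)).comp (key 0 le_rfl)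
      exact h3.congr fun n => ((hseq n).2.2 θ hθ).symm
    exact tendsto_nhds_unique (key θ hθ) h2
  · -- existence of the decomposition
    intro φ hφ
    obtain ⟨hφc, Nφ, hNφ⟩ := hφ
    have hmem : φ 0 ∈ Ets ⊔ Etu := by rw [hcompl.sup_eq_top]; exact Submodule.mem_top
    obtain ⟨y, hy, z, hz, hyz⟩ := Submodule.mem_sup.1 hmem
    refine ⟨fun θ => φ θ - NormedSpace.exp (θ • A) z, ⟨⟨hφc.sub (hcontv z).continuousOn,
      Nφ + Cu * ‖z‖, fun θ hθ => ?_⟩, ?_⟩,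
      fun θ => NormedSpace.exp (θ • A) z, ⟨⟨(hcontv z).continuousOn, Cu * ‖z‖,
        fun θ hθ => hexpB z hz θ hθ⟩, ?_, fun θ hθ => ?_⟩, fun θ hθ => ?_⟩
    · calc Real.exp (lam * θ) * ‖φ θ - NormedSpace.exp (θ • A) z‖
          ≤ Real.exp (lam * θ) * (‖φ θ‖ + ‖NormedSpace.exp (θ • A) z‖) :=
            mul_le_mul_of_nonneg_left (norm_sub_le _ _) (Real.exp_pos _).le
        _ = Real.exp (lam * θ) * ‖φ θ‖
            + Real.exp (lam * θ) * ‖NormedSpace.exp (θ • A) z‖ := by ring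
        _ ≤ Nφ + Cu * ‖z‖ := add_le_add (hNφ θ hθ) (hexpB z hz θ hθ)
    · show φ 0 - NormedSpace.exp ((0:ℝ) • A) z ∈ Ets
      rw [hexp0 z, show φ 0 - z = y by rw [← hyz]; abel]
      exact hy
    · show NormedSpace.exp ((0:ℝ) • A) z ∈ Etu
      rw [hexp0 z]; exact hz
    · show NormedSpace.exp (θ • A) z
        = NormedSpace.exp (θ • A) (NormedSpace.exp ((0:ℝ) • A) z)
      rw [hexp0 z]
    · show φ θ = (φ θ - NormedSpace.exp (θ • A) z) + NormedSpace.exp (θ • A) z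
      abel
  · -- uniqueness of the decomposition
    rintro φs ⟨_, hs0⟩ φu ⟨_, hu0, huf⟩ φs' ⟨_, hs0'⟩ φu' ⟨_, hu0', huf'⟩ heq
    have h0 : φs 0 + φu 0 = φs' 0 + φu' 0 := heq (mem_Iic.2 le_rfl)
    have hd1 : φs 0 - φs' 0 ∈ Ets := Ets.sub_mem hs0 hs0'
    have hd2 : φs 0 - φs' 0 ∈ Etu := by
      rw [show φs 0 - φs' 0 = φu' 0 - φu 0 by
        rw [sub_eq_sub_iff_add_eq_add, h0]; abel]
      exact Etu.sub_mem hu0' hu0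
    have hd0 : φs 0 - φs' 0 = 0 := Submodule.disjoint_def.1 hcompl.disjoint _ hd1 hd2
    have hs0eq : φs 0 = φs' 0 := sub_eq_zero.1 hd0
    have hu0eq : φu 0 = φu' 0 := by
      have := h0
      rw [hs0eq] at this
      exact add_left_cancel this
    have hEqu : Set.EqOn φu φu' (Iic 0) := fun θ hθ => by
      rw [huf θ (mem_Iic.1 hθ), huf' θ (mem_Iic.1 hθ), hu0eq]
    refine ⟨fun θ hθ => ?_, hEqu⟩
    have h1 : φs θ + φu θ = φs' θ + φu' θ := heq hθ
    rw [hEqu hθ] at h1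
    exact add_right_cancel h1
  · -- invariance of Es
    rintro t ht φ ⟨hφB, hφ0⟩
    refine ⟨hVB t ht φ hφB, ?_⟩
    show (if (0:ℝ) < -t then φ (t + 0) else NormedSpace.exp ((t + 0) • A) (φ 0)) ∈ Ets
    rw [if_neg (by linarith), add_zero]
    exact hinvS t _ hφ0
  · -- invariance of Eu
    rintro t ht φ ⟨hφB, hφ0, hφf⟩
    have hV0 : (if (0:ℝ) < -t then φ (t + 0) else NormedSpace.exp ((t + 0) • A) (φ 0))
        = NormedSpace.exp (t • A) (φ 0) := by
      rw [if_neg (by linarith), add_zero]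
    refine ⟨hVB t ht φ hφB, ?_, fun θ hθ => ?_⟩
    · show (if (0:ℝ) < -t then φ (t + 0) else NormedSpace.exp ((t + 0) • A) (φ 0)) ∈ Etu
      rw [hV0]
      exact hinvU t _ hφ0
    · show (if θ < -t then φ (t + θ) else NormedSpace.exp ((t + θ) • A) (φ 0))
        = NormedSpace.exp (θ • A)
          (if (0:ℝ) < -t then φ (t + 0) else NormedSpace.exp ((t + 0) • A) (φ 0))
      rw [hV0]
      have hall : (if θ < -t then φ (t + θ) else NormedSpace.exp ((t + θ) • A) (φ 0))
          = NormedSpace.exp ((t + θ) • A) (φ 0) := by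
        by_cases h : θ < -t
        · rw [if_pos h]; exact hφf (t + θ) (by linarith)
        · rw [if_neg h]
      rw [hall, show t + θ = θ + t by ring, hexpadd θ t (φ 0)]
end
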